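/- arXiv:2510.19933 — 3 statements merged into one kernel-verified Lean document; each statement's English description precedes it below -/
import Mathlib

section
/- Suppose f : X → ℝ is continuously differentiable, bounded below by f*, and its gradient is L-Lipschitz with respect to norm ‖·‖ (i.e., ‖∇f(x) - ∇f(y)‖⋆ ≤ L‖x - y‖ for all x, y). Let x^{k+1} = x^k + γ_k d̂^k where d̂^k is an inexact LMO output for ∇f(x^k) with error δ_k ≥ 0. Then f(x^{k+1}) ≤ f(x^k) - γ_k ‖∇f(x^k)‖⋆ (1 - δ_k) + (L/2) γ_k² (1 + δ_k)². -/
/-- Per-iteration descent inequality for the deterministic inexact LMO method: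
for an `L`-smooth `f` (quadratic upper bound w.r.t. an arbitrary norm `N` with
dual norm `Nd`), if `d` is the exact LMO direction for the gradient `g x`
and `N (d̂ - d) ≤ δ`, then the step `x⁺ = x + γ d̂` satisfies
`f(x⁺) ≤ f(x) - γ ‖∇f(x)‖⋆ (1-δ) + (L/2) γ² (1+δ)²`. -/
theorem stmt2 {X : Type*} [NormedAddCommGroup X] [InnerProductSpace ℝ X]
    (N Nd : X → ℝ) (f : X → ℝ) (g : X → X) (L : ℝ) (hL : 0 ≤ L)
    (hsmooth : ∀ x y : X,
      f y ≤ f x + (inner ℝ (g x) (y - x) : ℝ) + L / 2 * (N (y - x)) ^ 2)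
    (hN_nonneg : ∀ v : X, 0 ≤ N v)
    (hN_smul : ∀ (c : ℝ) (v : X), N (c • v) = |c| * N v)
    (hN_tri : ∀ v w : X, N (v + w) ≤ N v + N w)
    (x d dhat : X) (γ δ : ℝ) (hγ : 0 < γ) (hδ : 0 ≤ δ)
    (hNd_nonneg : 0 ≤ Nd (g x))
    (hdual : ∀ v : X, (inner ℝ (g x) v : ℝ) ≤ Nd (g x) * N v)
    (hlmo : (inner ℝ (g x) d : ℝ) = -Nd (g x)) (hd : N d ≤ 1)
    (hdhat : N (dhat - d) ≤ δ) :
    f (x + γ • dhat) ≤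
      f x - γ * Nd (g x) * (1 - δ) + L / 2 * γ ^ 2 * (1 + δ) ^ 2 := by
  have h1 := hsmooth x (x + γ • dhat)
  have hy : x + γ • dhat - x = γ • dhat := by abel
  rw [hy] at h1
  have hinner : (inner ℝ (g x) (γ • dhat) : ℝ) = γ * (inner ℝ (g x) dhat : ℝ) := by
    simp [real_inner_smul_right]
  have hdhat_split : (inner ℝ (g x) dhat : ℝ) ≤ -Nd (g x) + Nd (g x) * δ := by
    have : dhat = d + (dhat - d) := by abel
    calc (inner ℝ (g x) dhat : ℝ) = (inner ℝ (g x) d : ℝ) + (inner ℝ (g x) (dhat - d) : ℝ) := by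
          nth_rewrite 1 [this]; rw [inner_add_right]
      _ ≤ -Nd (g x) + Nd (g x) * δ := by
          rw [hlmo]
          have := hdual (dhat - d)
          nlinarith [mul_le_mul_of_nonneg_left hdhat hNd_nonneg]
  have hNdh : N dhat ≤ 1 + δ := by
    have : dhat = d + (dhat - d) := by abel
    calc N dhat = N (d + (dhat - d)) := by rw [← this]
      _ ≤ N d + N (dhat - d) := hN_tri _ _
      _ ≤ 1 + δ := by linarith
  have hNsq : (N (γ • dhat)) ^ 2 ≤ γ ^ 2 * (1 + δ) ^ 2 := by
    rw [hN_smul, abs_of_pos hγ]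
    rw [mul_pow]
    exact mul_le_mul_of_nonneg_left (pow_le_pow_left₀ (hN_nonneg dhat) hNdh 2) (sq_nonneg γ)
  have hin2 : γ * (inner ℝ (g x) dhat : ℝ) ≤ γ * (-Nd (g x) + Nd (g x) * δ) :=
    mul_le_mul_of_nonneg_left hdhat_split hγ.le
  have hL2 : L / 2 * (N (γ • dhat)) ^ 2 ≤ L / 2 * (γ ^ 2 * (1 + δ) ^ 2) :=
    mul_le_mul_of_nonneg_left hNsq (by linarith)
  calc f (x + γ • dhat) ≤ f x + γ * (inner ℝ (g x) dhat : ℝ) + L / 2 * (N (γ • dhat)) ^ 2 := by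
        rw [← hinner]; exact h1
    _ ≤ f x + γ * (-Nd (g x) + Nd (g x) * δ) + L / 2 * (γ ^ 2 * (1 + δ) ^ 2) := by linarith
    _ = f x - γ * Nd (g x) * (1 - δ) + L / 2 * γ ^ 2 * (1 + δ) ^ 2 := by ring
end

section
/- Under the constant-parameter descent inequality f(x^{k+1}) ≤ f(x^k) - γ‖∇f(x^k)‖⋆(1-δ) + (L/2)γ²(1+δ)² for all k < K, with δ ∈ [0,1), γ > 0, and f bounded below by f*, the average gradient norm satisfies (1/K) Σ_{k=0}^{K-1} ‖∇f(x^k)‖⋆ ≤ Δ⁰ / (Kγ(1-δ)) + Lγ(1+δ)² / (2(1-δ)). -/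
/-- Constant-parameter deterministic bound: under the per-iteration descent
inequality with constant step size `γ` and inexactness `δ ∈ [0,1)`, the average
dual gradient norm satisfies
`(1/K) Σ_{k<K} ‖∇f(x^k)‖⋆ ≤ Δ⁰/(Kγ(1-δ)) + Lγ(1+δ)²/(2(1-δ))`. -/
theorem stmt4 (K : ℕ) (hK : 0 < K) (L fstar γ δ : ℝ)
    (hγ : 0 < γ) (hδ0 : 0 ≤ δ) (hδ1 : δ < 1)
    (φ G : ℕ → ℝ) (hGnn : ∀ k, 0 ≤ G k)
    (hdesc : ∀ k < K,
      φ (k + 1) ≤ φ k - γ * G k * (1 - δ) + L / 2 * γ ^ 2 * (1 + δ) ^ 2)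
    (hlb : ∀ k, fstar ≤ φ k) :
    (1 / (K : ℝ)) * ∑ k ∈ Finset.range K, G k ≤
      (φ 0 - fstar) / ((K : ℝ) * γ * (1 - δ)) + L * γ * (1 + δ) ^ 2 / (2 * (1 - δ)) := by
  set C := L / 2 * γ ^ 2 * (1 + δ) ^ 2 with hC
  have key : ∀ n ≤ K, φ n + γ * (1 - δ) * ∑ k ∈ Finset.range n, G k ≤ φ 0 + n * C := by
    intro n hn
    induction n with
    | zero => simp
    | succ m ih =>
      have hm : m < K := hn
      have ihm := ih (le_of_lt hm)
      have hd := hdesc m hm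
      rw [Finset.sum_range_succ]
      push_cast
      nlinarith [hd, ihm]
  have hKey := key K le_rfl
  have hKpos : (0:ℝ) < K := by exact_mod_cast hK
  have hδpos : (0:ℝ) < 1 - δ := by linarith
  have hsum : γ * (1 - δ) * ∑ k ∈ Finset.range K, G k ≤ (φ 0 - fstar) + K * C := by
    have := hlb K; linarith
  rw [div_add_div _ _ (by positivity) (by norm_num; positivity)]
  rw [one_div_mul_eq_div, div_le_div_iff₀ hKpos (by positivity)]
  have hexp : (φ 0 - fstar) * (2 * (1 - δ)) + K * γ * (1 - δ) * (L * γ * (1 + δ) ^ 2)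
      = 2 * (1 - δ) * ((φ 0 - fstar) + K * C) := by ring
  have h2 : 2 * (1 - δ) * ↑K * (γ * (1 - δ) * ∑ k ∈ Finset.range K, G k) ≤
      2 * (1 - δ) * ↑K * ((φ 0 - fstar) + ↑K * C) :=
    mul_le_mul_of_nonneg_left hsum (by positivity)
  nlinarith [h2, hexp]
end

section
/- Suppose for each k < K the iterates satisfy f(x^{k+1}) ≤ f(x^k) - ‖∇f(x^k)‖⋆²(1-δ_k)²/(2L(1+δ_k)²), where f is bounded below by f* and δ_k ∈ [0,1). Then min_{0 ≤ j < K} ‖∇f(x^j)‖⋆² ≤ 2LΔ⁰ / (Σ_{k=0}^{K-1} (1-δ_k)²/(1+δ_k)²), where Δ⁰ = f(x⁰) - f*. -/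
/-- Adaptive step size convergence: if for each `k < K` the iterates satisfy
`f(x^{k+1}) ≤ f(x^k) - ‖∇f(x^k)‖⋆²(1-δ_k)²/(2L(1+δ_k)²)` with `f` bounded below,
then `min_{j<K} ‖∇f(x^j)‖⋆² ≤ 2LΔ⁰ / Σ_{k<K} (1-δ_k)²/(1+δ_k)²`. -/
theorem stmt7 (K : ℕ) (hK : 0 < K) (L fstar : ℝ) (hL : 0 < L)
    (φ G δ : ℕ → ℝ) (hδ0 : ∀ k, 0 ≤ δ k) (hδ1 : ∀ k, δ k < 1)
    (hdesc : ∀ k < K,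
      φ (k + 1) ≤ φ k - (G k) ^ 2 * (1 - δ k) ^ 2 / (2 * L * (1 + δ k) ^ 2))
    (hlb : ∀ k, fstar ≤ φ k) :
    (Finset.range K).inf' (by simp [Finset.nonempty_range_iff]; omega)
        (fun j => (G j) ^ 2) ≤
      2 * L * (φ 0 - fstar) /
        (∑ k ∈ Finset.range K, (1 - δ k) ^ 2 / (1 + δ k) ^ 2) := by
  set w : ℕ → ℝ := fun k => (1 - δ k) ^ 2 / (1 + δ k) ^ 2 with hw
  set m : ℝ := (Finset.range K).inf'
      (by simp [Finset.nonempty_range_iff]; omega) (fun j => (G j) ^ 2) with hm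
  have hwpos : ∀ k, 0 < w k := fun k => by
    have h1 : (0:ℝ) < (1 - δ k) ^ 2 := pow_pos (by linarith [hδ1 k]) 2
    have h2 : (0:ℝ) < (1 + δ k) ^ 2 := pow_pos (by linarith [hδ0 k]) 2
    exact div_pos h1 h2
  have hS : 0 < ∑ k ∈ Finset.range K, w k :=
    Finset.sum_pos (fun k _ => hwpos k) (by simp [Finset.nonempty_range_iff]; omega)
  -- main induction
  have key : ∀ n ≤ K, φ n ≤ φ 0 - m / (2 * L) * ∑ k ∈ Finset.range n, w k := by
    intro n hn
    induction n with
    | zero => simp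
    | succ n ih =>
      have hnK : n < K := hn
      have ihn := ih (le_of_lt hnK)
      have hmle : m ≤ (G n) ^ 2 := Finset.inf'_le _ (Finset.mem_range.mpr hnK)
      have hdn := hdesc n hnK
      have hterm : m / (2 * L) * w n ≤ (G n) ^ 2 * (1 - δ n) ^ 2 / (2 * L * (1 + δ n) ^ 2) := by
        have h2 : (0:ℝ) < (1 + δ n) ^ 2 := pow_pos (by linarith [hδ0 n]) 2
        rw [div_mul_eq_mul_div, hw]
        simp only
        rw [mul_div_assoc', div_div, div_le_div_iff₀ (by positivity) (by positivity)]
        nlinarith [mul_nonneg (mul_nonneg (sub_nonneg.mpr hmle) (sq_nonneg (1 - δ n))) (sq_nonneg (1 + δ n)), hL.le]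
      rw [Finset.sum_range_succ, mul_add]
      linarith
  have hfin := key K le_rfl
  have hKlb := hlb K
  have h2L : (0:ℝ) < 2 * L := by linarith
  rw [le_div_iff₀ hS]
  have : m / (2 * L) * ∑ k ∈ Finset.range K, w k ≤ φ 0 - fstar := by linarith
  calc m * ∑ k ∈ Finset.range K, w k
      = (m / (2 * L) * ∑ k ∈ Finset.range K, w k) * (2 * L) := by
        field_simp
    _ ≤ (φ 0 - fstar) * (2 * L) := by
        apply mul_le_mul_of_nonneg_right this (le_of_lt h2L)
    _ = 2 * L * (φ 0 - fstar) := by ring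
end
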